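/- For any positive reals a, s and any real A, the integral ∫₀ˣ t^A exp(a t^s) dt is asymptotically equal to (1/(a s)) x^{A+1-s} exp(a x^s) as x → ∞; that is, the ratio of the integral to (1/(a s)) x^{A+1-s} exp(a x^s) tends to 1. -/

import Mathlib

open MeasureTheory Filter Real

lemma aux_int (a s A : ℝ) (ha : 0 < a) (hs : 0 < s) (hA : -1 < A) (x : ℝ) :
    IntegrableOn (fun t => t ^ A * Real.exp (a * t ^ s)) (Set.Ioo 0 x) := by
  rcases le_or_gt x 0 with hx | hx
  · rw [Set.Ioo_eq_empty (by intro h; exact absurd (h.trans_le hx) (lt_irrefl 0))]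
    exact integrableOn_empty
  · have hg : IntegrableOn (fun t => Real.exp (a * x ^ s) * t ^ A) (Set.Ioo 0 x) := by
      have := (intervalIntegral.intervalIntegrable_rpow' (a := 0) (b := x) hA).1
      exact (this.mono_set Set.Ioo_subset_Ioc_self).const_mul _
    have hmeas : AEStronglyMeasurable (fun t => t ^ A * Real.exp (a * t ^ s))
        (volume.restrict (Set.Ioo (0:ℝ) x)) := by
      apply ContinuousOn.aestronglyMeasurable _ measurableSet_Ioo
      apply ContinuousOn.mul
      · exact continuousOn_id.rpow_const fun t ht => Or.inl (ne_of_gt ht.1)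
      · exact (Real.continuous_exp.comp_continuousOn
          ((continuousOn_const).mul (continuousOn_id.rpow_const fun t ht => Or.inl (ne_of_gt ht.1))))
    apply Integrable.mono' hg hmeas
    rw [ae_restrict_iff' measurableSet_Ioo]
    filter_upwards with t ht
    have ht0 : 0 < t := ht.1
    have h1 : t ^ s ≤ x ^ s := Real.rpow_le_rpow ht0.le ht.2.le hs.le
    have h2 : Real.exp (a * t ^ s) ≤ Real.exp (a * x ^ s) :=
      Real.exp_le_exp.2 (by nlinarith)
    rw [Real.norm_eq_abs, abs_of_nonneg (by positivity)]
    calc t ^ A * Real.exp (a * t ^ s) ≤ t ^ A * Real.exp (a * x ^ s) := by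
          apply mul_le_mul_of_nonneg_left h2 (by positivity)
      _ = Real.exp (a * x ^ s) * t ^ A := mul_comm _ _

lemma aux_deriv (a s A : ℝ) (ha : 0 < a) (hs : 0 < s) (t : ℝ) (ht : 0 < t) :
    HasDerivAt (fun x : ℝ => (1 / (a * s)) * x ^ (A + 1 - s) * Real.exp (a * x ^ s))
      (t ^ A * Real.exp (a * t ^ s) * (1 + (A + 1 - s) / (a * s) * t ^ (-s))) t := by
  have has : a * s ≠ 0 := by positivity
  have h1 : HasDerivAt (fun x : ℝ => x ^ (A + 1 - s)) ((A + 1 - s) * t ^ (A - s)) t := by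
    have := Real.hasDerivAt_rpow_const (x := t) (p := A + 1 - s) (Or.inl (ne_of_gt ht))
    convert this using 2
    ring_nf
  have h2 : HasDerivAt (fun x : ℝ => Real.exp (a * x ^ s))
      (Real.exp (a * t ^ s) * (a * (s * t ^ (s - 1)))) t := by
    have hi : HasDerivAt (fun x : ℝ => a * x ^ s) (a * (s * t ^ (s - 1))) t :=
      (Real.hasDerivAt_rpow_const (x := t) (p := s) (Or.inl (ne_of_gt ht))).const_mul a
    exact (Real.hasDerivAt_exp _).comp t hi
  have h3 := ((h1.const_mul (1 / (a * s))).mul h2)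
  refine h3.congr_deriv ?_
  have e1 : t ^ (A - s) = t ^ A * t ^ (-s) := by
    rw [← Real.rpow_add ht]; ring_nf
  have e2 : t ^ (A + 1 - s) * t ^ (s - 1) = t ^ A := by
    rw [← Real.rpow_add ht]; ring_nf
  rw [e1, ← e2]
  field_simp
  ring

lemma aux_top (a s A : ℝ) (ha : 0 < a) (hs : 0 < s) :
    Tendsto (fun x : ℝ => (1 / (a * s)) * x ^ (A + 1 - s) * Real.exp (a * x ^ s))
      atTop atTop := by
  set b := A + 1 - s with hb
  have hlo : (fun x : ℝ => b * Real.log x) =o[atTop] fun x => x ^ s :=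
    (isLittleO_log_rpow_atTop hs).const_mul_left b
  have hev : ∀ᶠ x : ℝ in atTop, (a / 2) * x ^ s ≤ b * Real.log x + a * x ^ s := by
    filter_upwards [hlo.bound (by positivity : (0:ℝ) < a / 2),
      eventually_ge_atTop (0:ℝ)] with x hx hx0
    rw [Real.norm_eq_abs, Real.norm_eq_abs, abs_of_nonneg (Real.rpow_nonneg hx0 s)] at hx
    rw [abs_le] at hx
    linarith [hx.1]
  have h1 : Tendsto (fun x : ℝ => b * Real.log x + a * x ^ s) atTop atTop := by
    apply tendsto_atTop_mono' _ hev
    exact (tendsto_rpow_atTop hs).const_mul_atTop (by positivity)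
  have h2 : Tendsto (fun x : ℝ => Real.exp (b * Real.log x + a * x ^ s)) atTop atTop :=
    Real.tendsto_exp_atTop.comp h1
  have h3 : Tendsto (fun x : ℝ => (1 / (a * s)) * Real.exp (b * Real.log x + a * x ^ s))
      atTop atTop := h2.const_mul_atTop (by positivity)
  apply h3.congr'
  filter_upwards [eventually_gt_atTop (0:ℝ)] with x hx
  rw [Real.exp_add, Real.rpow_def_of_pos hx b, mul_comm b (Real.log x)]
  ring

lemma aux_split (f : ℝ → ℝ) (hf : ∀ x, IntegrableOn f (Set.Ioo 0 x)) (y x : ℝ)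
    (hy : 0 < y) (hyx : y ≤ x) :
    ∫ t in Set.Ioo (0:ℝ) x, f t = (∫ t in Set.Ioo (0:ℝ) y, f t) + ∫ t in y..x, f t := by
  have hIoc : ∀ z : ℝ, IntegrableOn f (Set.Ioc 0 z) := fun z =>
    (hf z).congr_set_ae (Ioo_ae_eq_Ioc (a := (0:ℝ)) (b := z)).symm
  have h1 : IntervalIntegrable f volume 0 y := by
    rw [intervalIntegrable_iff_integrableOn_Ioc_of_le hy.le]; exact hIoc y
  have h2 : IntervalIntegrable f volume y x := by
    rw [intervalIntegrable_iff_integrableOn_Ioc_of_le hyx]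
    exact (hIoc x).mono_set (Set.Ioc_subset_Ioc hy.le le_rfl)
  have e : ∀ z : ℝ, 0 < z → ∫ t in Set.Ioo (0:ℝ) z, f t = ∫ t in (0:ℝ)..z, f t := by
    intro z hz
    rw [intervalIntegral.integral_of_le hz.le, ← MeasureTheory.integral_Ioc_eq_integral_Ioo]
  rw [e x (hy.trans_le hyx), e y hy, ← intervalIntegral.integral_add_adjacent_intervals h1 h2]

lemma aux_main (s c : ℝ) (hs : 0 < s) (f G : ℝ → ℝ)
    (hfint : ∀ x, IntegrableOn f (Set.Ioo 0 x))
    (hfpos : ∀ t, 0 < t → 0 ≤ f t)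
    (hfc : ∀ y x : ℝ, 0 < y → ContinuousOn f (Set.Icc y x))
    (hGd : ∀ t, 0 < t → HasDerivAt G (f t * (1 + c * t ^ (-s))) t)
    (hGtop : Tendsto G atTop atTop) :
    Tendsto (fun x => (∫ t in Set.Ioo (0:ℝ) x, f t) / G x) atTop (nhds 1) := by
  rw [Metric.tendsto_nhds]
  intro ε hε
  set ε₀ := min ε (1/2) with hε₀def
  have hε₀ : 0 < ε₀ := lt_min hε (by norm_num)
  have hε₀le : ε₀ ≤ 1/2 := min_le_right _ _
  have hε₀lt : ε₀ < 1 := hε₀le.trans_lt (by norm_num)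
  set δ := ε₀ / 2 with hδdef
  have hδ0 : 0 < δ := by positivity
  have hδ1 : δ < 1 := by rw [hδdef]; linarith
  have h1δ : (0:ℝ) < 1 - δ := by linarith
  have h1δ' : (0:ℝ) < 1 + δ := by linarith
  have htail : ∀ᶠ t : ℝ in atTop, |c * t ^ (-s)| ≤ δ := by
    have h0 : Tendsto (fun t : ℝ => c * t ^ (-s)) atTop (nhds 0) := by
      simpa using (tendsto_rpow_neg_atTop hs).const_mul c
    filter_upwards [Metric.tendsto_nhds.1 h0 δ hδ0] with t ht
    rw [Real.dist_eq, sub_zero] at ht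
    exact ht.le
  obtain ⟨y₀, hy₀⟩ := eventually_atTop.1 htail
  set y := max y₀ 1 with hy_def
  have hy : (0:ℝ) < y := lt_of_lt_of_le one_pos (le_max_right _ _)
  have hyb : ∀ t, y ≤ t → |c * t ^ (-s)| ≤ δ := fun t ht => hy₀ t ((le_max_left _ _).trans ht)
  have key : ∀ x, y ≤ x →
      (1 - δ) * (∫ t in y..x, f t) ≤ G x - G y ∧
        G x - G y ≤ (1 + δ) * ∫ t in y..x, f t := by
    intro x hyx
    have huIcc : Set.uIcc y x = Set.Icc y x := Set.uIcc_of_le hyx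
    have hfc' : ContinuousOn f (Set.Icc y x) := hfc y x hy
    have hderc : ContinuousOn (fun t => f t * (1 + c * t ^ (-s))) (Set.Icc y x) := by
      apply hfc'.mul
      apply continuousOn_const.add (continuousOn_const.mul _)
      exact continuousOn_id.rpow_const fun t ht => Or.inl (ne_of_gt (lt_of_lt_of_le hy ht.1))
    have hint1 : IntervalIntegrable f volume y x := by
      apply ContinuousOn.intervalIntegrable; rw [huIcc]; exact hfc'
    have hint2 : IntervalIntegrable (fun t => f t * (1 + c * t ^ (-s))) volume y x := by
      apply ContinuousOn.intervalIntegrable; rw [huIcc]; exact hderc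
    have hFTC : ∫ t in y..x, f t * (1 + c * t ^ (-s)) = G x - G y := by
      apply intervalIntegral.integral_eq_sub_of_hasDerivAt _ hint2
      intro t ht
      rw [huIcc] at ht
      exact hGd t (lt_of_lt_of_le hy ht.1)
    constructor
    · rw [← hFTC, ← intervalIntegral.integral_const_mul]
      apply intervalIntegral.integral_mono_on hyx (hint1.const_mul _) hint2
      intro t ht
      have h1 := abs_le.1 (hyb t ht.1)
      have h2 := hfpos t (lt_of_lt_of_le hy ht.1)
      calc (1 - δ) * f t = f t * (1 - δ) := mul_comm _ _
        _ ≤ f t * (1 + c * t ^ (-s)) :=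
            mul_le_mul_of_nonneg_left (by linarith [h1.1]) h2
    · rw [← hFTC, ← intervalIntegral.integral_const_mul]
      apply intervalIntegral.integral_mono_on hyx hint2 (hint1.const_mul _)
      intro t ht
      have h1 := abs_le.1 (hyb t ht.1)
      have h2 := hfpos t (lt_of_lt_of_le hy ht.1)
      calc f t * (1 + c * t ^ (-s)) ≤ f t * (1 + δ) :=
            mul_le_mul_of_nonneg_left (by linarith [h1.2]) h2
        _ = (1 + δ) * f t := mul_comm _ _
  set Iy := ∫ t in Set.Ioo (0:ℝ) y, f t with hIy
  have hGpos : ∀ᶠ x in atTop, 0 < G x := hGtop.eventually_gt_atTop 0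
  have h0 : Tendsto (fun x => Iy / G x) atTop (nhds 0) :=
    Tendsto.div_atTop tendsto_const_nhds hGtop
  have h0' : Tendsto (fun x => G y / G x) atTop (nhds 0) :=
    Tendsto.div_atTop tendsto_const_nhds hGtop
  have hquot : Tendsto (fun x => (G x - G y) / G x) atTop (nhds 1) := by
    have h2 : Tendsto (fun x => 1 - G y / G x) atTop (nhds (1 - 0)) :=
      tendsto_const_nhds.sub h0'
    rw [sub_zero] at h2
    apply h2.congr'
    filter_upwards [hGpos] with x hx
    rw [sub_div, div_self (ne_of_gt hx)]
  have hU : Tendsto (fun x => Iy / G x + ((G x - G y) / G x) / (1 - δ)) atTop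
      (nhds (0 + 1 / (1 - δ))) := h0.add (by simpa using hquot.div_const (1 - δ))
  have hL : Tendsto (fun x => Iy / G x + ((G x - G y) / G x) / (1 + δ)) atTop
      (nhds (0 + 1 / (1 + δ))) := h0.add (by simpa using hquot.div_const (1 + δ))
  have hUlim : (0:ℝ) + 1 / (1 - δ) < 1 + ε₀ := by
    rw [zero_add, div_lt_iff₀ h1δ]; nlinarith
  have hLlim : 1 - ε₀ < (0:ℝ) + 1 / (1 + δ) := by
    rw [zero_add, lt_div_iff₀ h1δ']; nlinarith
  have hUev := hU.eventually_lt_const hUlim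
  have hLev := hL.eventually_const_lt hLlim
  filter_upwards [eventually_ge_atTop y, hGpos, hUev, hLev] with x hyx hGx hxU hxL
  obtain ⟨k1, k2⟩ := key x hyx
  have hsplit := aux_split f hfint y x hy hyx
  set J := ∫ t in y..x, f t with hJ
  have hrU : (∫ t in Set.Ioo (0:ℝ) x, f t) / G x ≤ Iy / G x + ((G x - G y) / G x) / (1 - δ) := by
    rw [hsplit, add_div, div_right_comm]
    have : J ≤ (G x - G y) / (1 - δ) := (le_div_iff₀ h1δ).2 (by linarith)
    gcongr
  have hrL : Iy / G x + ((G x - G y) / G x) / (1 + δ) ≤ (∫ t in Set.Ioo (0:ℝ) x, f t) / G x := by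
    rw [hsplit, add_div, div_right_comm]
    have : (G x - G y) / (1 + δ) ≤ J := (div_le_iff₀ h1δ').2 (by linarith)
    gcongr
  rw [Real.dist_eq, abs_lt]
  have hmin : ε₀ ≤ ε := min_le_left _ _
  constructor <;> linarith

theorem integral_exp_rpow_asymptotic (a s A : ℝ) (ha : 0 < a) (hs : 0 < s) (hA : -1 < A) :
    Tendsto (fun x : ℝ =>
        (∫ t in Set.Ioo (0 : ℝ) x, t ^ A * Real.exp (a * t ^ s)) /
          ((1 / (a * s)) * x ^ (A + 1 - s) * Real.exp (a * x ^ s)))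
      atTop (nhds 1) := by
  exact aux_main s ((A + 1 - s) / (a * s)) hs
    (fun t => t ^ A * Real.exp (a * t ^ s))
    (fun x => (1 / (a * s)) * x ^ (A + 1 - s) * Real.exp (a * x ^ s))
    (aux_int a s A ha hs hA)
    (fun t ht => by positivity)
    (fun y x hy => by
      apply ContinuousOn.mul
      · exact continuousOn_id.rpow_const fun t ht => Or.inl (ne_of_gt (lt_of_lt_of_le hy ht.1))
      · exact Real.continuous_exp.comp_continuousOn
          ((continuousOn_const).mul
            (continuousOn_id.rpow_const fun t ht => Or.inl (ne_of_gt (lt_of_lt_of_le hy ht.1)))))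
    (fun t ht => aux_deriv a s A ha hs t ht)
    (aux_top a s A ha hs)
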